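/- Let B_1 and B_2 be finite additive commutative groups, n ≥ 1, 0 ≤ s ≤ n, and q_1,…,q_n ≥ 2 such that q_1·q_2⋯q_s is coprime to |B_2| and q_{s+1}·q_{s+2}⋯q_n is coprime to |B_1|. Let f = (f_1, f_2) : ℤ^n → B_1 × B_2 be a polyfractal function that is q_j-periodic in the j-th variable for each j. Then the first component f_1 depends only on the variables x_1,…,x_s and the second component f_2 depends only on the variables x_{s+1},…,x_n; that is, f_1(x) = f_1(y) whenever x_j = y_j for all j ≤ s, and f_2(x) = f_2(y) whenever x_j = y_j for all j > s. -/

import Mathlib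

/-- The integer binomial coefficient `binom(x,δ) = x(x-1)⋯(x-δ+1)/δ!`. -/
noncomputable def ibinom (x : ℤ) (δ : ℕ) : ℤ := Ring.choose x δ

lemma ibinom_zero (x : ℤ) : ibinom x 0 = 1 := Ring.choose_zero_right x

lemma ibinom_pascal (x : ℤ) (k : ℕ) :
    ibinom (x + 1) (k + 1) = ibinom x (k + 1) + ibinom x k :=
  by rw [show ibinom (x+1) (k+1) = Ring.choose (x+1) (k+1) from rfl, Ring.choose_succ_succ x k, add_comm]; rfl

/-- A one-variable polyfractal function of degree ≤ D into a group killed by `m`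
has period `m^(D+1)`. -/
lemma poly_period {B : Type*} [AddCommGroup B] (m : ℕ) (hm : ∀ b : B, m • b = 0) :
    ∀ (D : ℕ) (a : ℕ → B) (g : ℤ → B),
      (∀ t, g t = ∑ δ ∈ Finset.range (D + 1), ibinom t δ • a δ) →
      ∀ t : ℤ, g (t + (m : ℤ) ^ (D + 1)) = g t := by
  intro D
  induction D with
  | zero =>
    intro a g hg t
    rw [hg, hg]
    simp [ibinom_zero]
  | succ D ih =>
    intro a g hg t
    set P : ℤ := (m : ℤ) ^ (D + 1) with hP
    have hdiff : ∀ u : ℤ, g (u + 1) - g u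
        = ∑ k ∈ Finset.range (D + 1), ibinom u k • a (k + 1) := by
      intro u
      rw [hg, hg, ← Finset.sum_sub_distrib, Finset.sum_range_succ']
      have h0 : ibinom (u + 1) 0 • a 0 - ibinom u 0 • a 0 = 0 := by
        rw [ibinom_zero, ibinom_zero, sub_self]
      rw [h0, add_zero]
      refine Finset.sum_congr rfl fun k hk => ?_
      rw [← sub_smul, ibinom_pascal, add_sub_cancel_left]
    have hgd : ∀ u : ℤ, (g (u + P + 1) - g (u + P)) = (g (u + 1) - g u) := by
      intro u
      exact ih (fun k => a (k + 1)) (fun u => g (u + 1) - g u) hdiff u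
    set h : ℤ → B := fun u => g (u + P) - g u with hh
    have hstep : ∀ u : ℤ, h (u + 1) = h u := by
      intro u
      have e1 : u + 1 + P = u + P + 1 := by ring
      have : h (u + 1) - h u = (g (u + P + 1) - g (u + P)) - (g (u + 1) - g u) := by
        simp only [hh, e1]; abel
      rw [hgd u, sub_self] at this
      exact sub_eq_zero.mp this
    have hconst : ∀ u : ℤ, h u = h 0 := by
      intro u
      induction u using Int.induction_on with
      | zero => rfl
      | succ k ihk => rw [hstep, ihk]
      | pred k ihk =>
        have := hstep (-(k : ℤ) - 1)
        have e : -(k : ℤ) - 1 + 1 = -(k : ℤ) := by ring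
        rw [e] at this
        rw [← this, ihk]
    have hiter : ∀ (k : ℕ) (u : ℤ), g (u + (k : ℤ) * P) = g u + k • h 0 := by
      intro k
      induction k with
      | zero => intro u; simp
      | succ k ihk =>
        intro u
        have e : u + ((k : ℕ) + 1 : ℤ) * P = (u + (k : ℤ) * P) + P := by push_cast; ring
        have hgu : ∀ v : ℤ, g (v + P) = g v + h v := by
          intro v; simp only [hh]; abel
        rw [show (((k + 1 : ℕ) : ℤ)) = ((k : ℕ) : ℤ) + 1 by push_cast; ring, e, hgu,
          hconst (u + (k : ℤ) * P), ihk u, succ_nsmul, add_assoc]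
    have e2 : t + (m : ℤ) ^ (D + 1 + 1) = t + (m : ℤ) * P := by rw [hP, pow_succ]; ring
    rw [e2]
    have := hiter m t
    rw [this, hm (h 0), add_zero]

/-- Periods of `g` form an additive subgroup of `ℤ`. -/
def periodSubgroup {B : Type*} [AddCommGroup B] (g : ℤ → B) : AddSubgroup ℤ where
  carrier := {p : ℤ | ∀ t, g (t + p) = g t}
  zero_mem' := by intro t; simp
  add_mem' := by
    intro p r hp hr t
    rw [← add_assoc, hr, hp]
  neg_mem' := by
    intro p hp t
    have := hp (t + -p)
    rw [neg_add_cancel_right] at this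
    exact this.symm

lemma const_of_coprime_period {B : Type*} [AddCommGroup B] [Finite B]
    (g : ℤ → B) (D : ℕ) (a : ℕ → B)
    (hg : ∀ t, g t = ∑ δ ∈ Finset.range (D + 1), ibinom t δ • a δ)
    (q : ℕ) (hco : Nat.Coprime q (Nat.card B))
    (hper : ∀ t, g (t + (q : ℤ)) = g t) :
    ∀ t t' : ℤ, g t = g t' := by
  set m := Nat.card B with hmdef
  have hm : ∀ b : B, m • b = 0 := fun b => card_nsmul_eq_zero'
  have hM : ∀ t, g (t + (m : ℤ) ^ (D + 1)) = g t := poly_period m hm D a g hg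
  have hqS : (q : ℤ) ∈ periodSubgroup g := hper
  have hMS : ((m ^ (D + 1) : ℕ) : ℤ) ∈ periodSubgroup g := by
    push_cast; exact hM
  have h1 : (1 : ℤ) ∈ periodSubgroup g := by
    have hg1 : Int.gcd (q : ℤ) ((m ^ (D + 1) : ℕ) : ℤ) = 1 := by
      rw [Int.gcd_natCast_natCast]; exact hco.pow_right _
    have hb := Int.gcd_eq_gcd_ab (q : ℤ) ((m ^ (D + 1) : ℕ) : ℤ)
    rw [hg1] at hb
    rw [show (1 : ℤ) = ((1 : ℕ) : ℤ) by norm_num, hb]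
    apply add_mem
    · have := AddSubgroup.zsmul_mem _ hqS (Int.gcdA (q : ℤ) ((m ^ (D + 1) : ℕ) : ℤ))
      rwa [zsmul_eq_mul, mul_comm] at this
    · have := AddSubgroup.zsmul_mem _ hMS (Int.gcdB (q : ℤ) ((m ^ (D + 1) : ℕ) : ℤ))
      rwa [zsmul_eq_mul, mul_comm] at this
  have step : ∀ t : ℤ, g (t + 1) = g t := h1
  have hall : ∀ t : ℤ, g t = g 0 := by
    intro t
    induction t using Int.induction_on with
    | zero => rfl
    | succ k ihk => rw [step, ihk]
    | pred k ihk =>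
      have := step (-(k : ℤ) - 1)
      have e : -(k : ℤ) - 1 + 1 = -(k : ℤ) := by ring
      rw [e] at this
      rw [← this, ihk]
  intro t t'
  rw [hall t, hall t']

lemma key_const {n : ℕ} {C B : Type*} [AddCommGroup C] [AddCommGroup B] [Finite B]
    (f : (Fin n → ℤ) → C) (c : (Fin n → ℕ) →₀ C)
    (hpoly : ∀ x, f x = c.sum fun δ b => (∏ k, ibinom (x k) (δ k)) • b)
    (π : C →+ B) (q : Fin n → ℕ) (j : Fin n)
    (hcop : Nat.Coprime (q j) (Nat.card B))
    (hper : ∀ x, f (Function.update x j (x j + q j)) = f x)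
    (x : Fin n → ℤ) (t t' : ℤ) :
    π (f (Function.update x j t)) = π (f (Function.update x j t')) := by
  classical
  set D := c.support.sup (fun δ => δ j) with hD
  set r : (Fin n → ℕ) → ℤ := fun δ => ∏ k ∈ Finset.univ.erase j, ibinom (x k) (δ k) with hr
  set a : ℕ → B := fun d => ∑ δ ∈ c.support.filter (fun δ => δ j = d), r δ • π (c δ) with ha
  set g : ℤ → B := fun u => π (f (Function.update x j u)) with hgdef
  have hg : ∀ u, g u = ∑ d ∈ Finset.range (D + 1), ibinom u d • a d := by
    intro u
    have hprod : ∀ δ : Fin n → ℕ,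
        (∏ k, ibinom (Function.update x j u k) (δ k)) = ibinom u (δ j) * r δ := by
      intro δ
      rw [← Finset.mul_prod_erase Finset.univ
        (fun k => ibinom (Function.update x j u k) (δ k)) (Finset.mem_univ j)]
      congr 1
      · rw [Function.update_self]
      · refine Finset.prod_congr rfl fun k hk => ?_
        rw [Function.update_of_ne (Finset.ne_of_mem_erase hk)]
    calc g u = ∑ δ ∈ c.support, (∏ k, ibinom (Function.update x j u k) (δ k)) • π (c δ) := by
          rw [hgdef]
          simp only [hpoly, Finsupp.sum, map_sum]
          exact Finset.sum_congr rfl fun δ _ => map_zsmul π _ _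
      _ = ∑ δ ∈ c.support, ibinom u (δ j) • (r δ • π (c δ)) := by
          refine Finset.sum_congr rfl fun δ _ => ?_
          rw [hprod, mul_smul]
      _ = ∑ d ∈ Finset.range (D + 1), ∑ δ ∈ c.support.filter (fun δ => δ j = d),
            ibinom u (δ j) • (r δ • π (c δ)) := by
          rw [Finset.sum_fiberwise_of_maps_to]
          intro δ hδ
          rw [Finset.mem_range]
          exact Nat.lt_succ_of_le (Finset.le_sup (f := fun δ => δ j) hδ)
      _ = ∑ d ∈ Finset.range (D + 1), ibinom u d • a d := by
          refine Finset.sum_congr rfl fun d _ => ?_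
          rw [ha, Finset.smul_sum]
          refine Finset.sum_congr rfl fun δ hδ => ?_
          rw [(Finset.mem_filter.1 hδ).2]
  have hper' : ∀ u : ℤ, g (u + (q j : ℤ)) = g u := by
    intro u
    have h := hper (Function.update x j u)
    rw [Function.update_self, Function.update_idem] at h
    simp only [hgdef]
    rw [h]
  exact const_of_coprime_period g D a hg (q j) hcop hper' t t'

/-- Decomposition theorem: if `f = (f₁,f₂) : ℤ^n → B₁ × B₂` is polyfractal and
`q_j`-periodic in the `j`-th variable, where `q_1⋯q_s` is coprime to `|B₂|` and
`q_{s+1}⋯q_n` is coprime to `|B₁|`, then `f₁` depends only on `x_1,…,x_s` and `f₂`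
depends only on `x_{s+1},…,x_n`. -/
theorem stmt_17 (B₁ B₂ : Type*) [AddCommGroup B₁] [Finite B₁] [AddCommGroup B₂] [Finite B₂]
    (n : ℕ) (hn : 1 ≤ n) (s : ℕ) (hs : s ≤ n)
    (q : Fin n → ℕ) (hq : ∀ j, 2 ≤ q j)
    (hco₁ : Nat.Coprime (∏ j ∈ Finset.univ.filter (fun j : Fin n => (j : ℕ) < s), q j)
      (Nat.card B₂))
    (hco₂ : Nat.Coprime (∏ j ∈ Finset.univ.filter (fun j : Fin n => s ≤ (j : ℕ)), q j)
      (Nat.card B₁))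
    (f : (Fin n → ℤ) → B₁ × B₂)
    (hpoly : ∃ c : (Fin n → ℕ) →₀ B₁ × B₂,
      ∀ x : Fin n → ℤ, f x = c.sum fun δ b => (∏ j, ibinom (x j) (δ j)) • b)
    (hper : ∀ (x : Fin n → ℤ) (j : Fin n),
      f (Function.update x j (x j + q j)) = f x) :
    (∀ x y : Fin n → ℤ, (∀ j : Fin n, (j : ℕ) < s → x j = y j) → (f x).1 = (f y).1) ∧
      (∀ x y : Fin n → ℤ, (∀ j : Fin n, s ≤ (j : ℕ) → x j = y j) → (f x).2 = (f y).2) := by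
  classical
  obtain ⟨c, hc⟩ := hpoly
  have key₁ : ∀ (x : Fin n → ℤ) (j : Fin n), s ≤ (j : ℕ) → ∀ t t' : ℤ,
      (f (Function.update x j t)).1 = (f (Function.update x j t')).1 := by
    intro x j hj t t'
    have hd : q j ∣ ∏ j ∈ Finset.univ.filter (fun j : Fin n => s ≤ (j : ℕ)), q j :=
      Finset.dvd_prod_of_mem q (by simp [hj])
    exact key_const f c hc (AddMonoidHom.fst B₁ B₂) q j
      (Nat.Coprime.coprime_dvd_left hd hco₂) (fun z => hper z j) x t t'
  have key₂ : ∀ (x : Fin n → ℤ) (j : Fin n), (j : ℕ) < s → ∀ t t' : ℤ,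
      (f (Function.update x j t)).2 = (f (Function.update x j t')).2 := by
    intro x j hj t t'
    have hd : q j ∣ ∏ j ∈ Finset.univ.filter (fun j : Fin n => (j : ℕ) < s), q j :=
      Finset.dvd_prod_of_mem q (by simp [hj])
    exact key_const f c hc (AddMonoidHom.snd B₁ B₂) q j
      (Nat.Coprime.coprime_dvd_left hd hco₁) (fun z => hper z j) x t t'
  constructor
  · intro x y hxy
    have main : ∀ (T : Finset (Fin n)), (∀ j ∈ T, s ≤ (j : ℕ)) →
        ∀ x y : Fin n → ℤ, (∀ j, j ∉ T → x j = y j) → (f x).1 = (f y).1 := by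
      intro T
      induction T using Finset.induction_on with
      | empty =>
        intro _ x y h
        have : x = y := funext fun j => h j (by simp)
        rw [this]
      | @insert j T hjT ih =>
        intro hT x y h
        have hsj : s ≤ (j : ℕ) := hT j (Finset.mem_insert_self j T)
        have step1 : (f x).1 = (f (Function.update x j (y j))).1 := by
          conv_lhs => rw [← Function.update_eq_self j x]
          exact key₁ x j hsj (x j) (y j)
        rw [step1]
        apply ih (fun k hk => hT k (Finset.mem_insert_of_mem hk))
        intro k hk
        rcases eq_or_ne k j with rfl | hne
        · simp
        · rw [Function.update_of_ne hne]
          exact h k (by simp [Finset.mem_insert, hk, hne])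
    refine main (Finset.univ.filter fun j : Fin n => s ≤ (j : ℕ)) ?_ x y ?_
    · intro j hj; exact (Finset.mem_filter.1 hj).2
    · intro j hj
      apply hxy
      simp only [Finset.mem_filter, Finset.mem_univ, true_and] at hj
      omega
  · intro x y hxy
    have main : ∀ (T : Finset (Fin n)), (∀ j ∈ T, (j : ℕ) < s) →
        ∀ x y : Fin n → ℤ, (∀ j, j ∉ T → x j = y j) → (f x).2 = (f y).2 := by
      intro T
      induction T using Finset.induction_on with
      | empty =>
        intro _ x y h
        have : x = y := funext fun j => h j (by simp)
        rw [this]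
      | @insert j T hjT ih =>
        intro hT x y h
        have hsj : (j : ℕ) < s := hT j (Finset.mem_insert_self j T)
        have step1 : (f x).2 = (f (Function.update x j (y j))).2 := by
          conv_lhs => rw [← Function.update_eq_self j x]
          exact key₂ x j hsj (x j) (y j)
        rw [step1]
        apply ih (fun k hk => hT k (Finset.mem_insert_of_mem hk))
        intro k hk
        rcases eq_or_ne k j with rfl | hne
        · simp
        · rw [Function.update_of_ne hne]
          exact h k (by simp [Finset.mem_insert, hk, hne])
    refine main (Finset.univ.filter fun j : Fin n => (j : ℕ) < s) ?_ x y ?_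
    · intro j hj; exact (Finset.mem_filter.1 hj).2
    · intro j hj
      apply hxy
      simp only [Finset.mem_filter, Finset.mem_univ, true_and] at hj
      omega
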